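/- The braid b⁵ = σ_1^{−4} σ_2^{2} σ_1^{−3} σ_2^{−1} σ_1 Δ_3^2 in the braid group B_3 is not quasipositive. -/

import Mathlib

open FreeGroup in
/-- The braid relations on `n` generators. -/
def braidRels (n : ℕ) : Set (FreeGroup (Fin n)) :=
  {r | (∃ i j : Fin n, (i : ℕ) + 1 = (j : ℕ) ∧
          r = of i * of j * of i * (of j * of i * of j)⁻¹) ∨
       (∃ i j : Fin n, (i : ℕ) + 2 ≤ (j : ℕ) ∧
          r = of i * of j * (of j * of i)⁻¹)}

/-- The braid group `B_{n+1}`, presented with `n` generators `σ_1, …, σ_n`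
(so `Braid (m - 1)` is the braid group on `m` strands). -/
def Braid (n : ℕ) : Type := PresentedGroup (braidRels n)

instance (n : ℕ) : Group (Braid n) :=
  inferInstanceAs (Group (PresentedGroup (braidRels n)))

/-- The Artin generator `σ_{i+1}` of the braid group (indices start at `0`,
so `σ 0` is the generator usually written `σ_1`). -/
def σ {n : ℕ} (i : Fin n) : Braid n := PresentedGroup.of i

/-- A braid is quasipositive if it can be written as a (possibly empty) product
of conjugates `w σ_1 w⁻¹` of the first Artin generator. -/
def Quasipositive {n : ℕ} [NeZero n] (b : Braid n) : Prop :=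
  ∃ l : List (Braid n), b = (l.map fun w => w * σ 0 * w⁻¹).prod


/-- `σ_1` in the braid group `B_3`. -/
def σ₁ : Braid 2 := σ 0
/-- `σ_2` in the braid group `B_3`. -/
def σ₂ : Braid 2 := σ 1
/-- The Garside element `Δ_3 = σ_1 σ_2 σ_1` of `B_3`. -/
def Δ₃ : Braid 2 := σ₁ * σ₂ * σ₁


-- exponent sum
def εf : Fin 2 → Multiplicative ℤ := fun _ => Multiplicative.ofAdd 1

lemma εrels : ∀ r ∈ braidRels 2, FreeGroup.lift εf r = 1 := by
  rintro r (⟨i, j, hij, rfl⟩ | ⟨i, j, hij, rfl⟩)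
  · simp only [map_mul, map_inv, FreeGroup.lift_apply_of, εf]; group
  · omega

noncomputable def ε : Braid 2 →* Multiplicative ℤ := PresentedGroup.toGroup εrels

abbrev SL2 := Matrix.SpecialLinearGroup (Fin 2) ℤ

def A : SL2 := ⟨!![1, 1; 0, 1], by simp [Matrix.det_fin_two_of]⟩
def B : SL2 := ⟨!![1, 0; -1, 1], by simp [Matrix.det_fin_two_of]⟩
def Ai : SL2 := ⟨!![1, -1; 0, 1], by simp [Matrix.det_fin_two_of]⟩
def Bi : SL2 := ⟨!![1, 0; 1, 1], by simp [Matrix.det_fin_two_of]⟩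

def ρf : Fin 2 → SL2 := ![A, B]

lemma ρrels : ∀ r ∈ braidRels 2, FreeGroup.lift ρf r = 1 := by
  rintro r (⟨i, j, hij, rfl⟩ | ⟨i, j, hij, rfl⟩)
  · have hi : i = 0 := by omega
    have hj : j = 1 := by omega
    subst hi; subst hj
    simp only [map_mul, map_inv, FreeGroup.lift_apply_of]
    rw [mul_inv_eq_one]
    ext : 1
    simp only [ρf, Matrix.cons_val_zero, Matrix.cons_val_one, Matrix.SpecialLinearGroup.coe_mul]
    simp [ρf, A, B, Matrix.mul_fin_two]
  · exfalso; omega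

noncomputable def ρ : Braid 2 →* SL2 := PresentedGroup.toGroup ρrels

lemma ρσ₁ : ρ σ₁ = A := PresentedGroup.toGroup.of ρrels
lemma ρσ₂ : ρ σ₂ = B := PresentedGroup.toGroup.of ρrels
lemma εσ₁ : ε σ₁ = Multiplicative.ofAdd 1 := PresentedGroup.toGroup.of εrels
lemma εσ₂ : ε σ₂ = Multiplicative.ofAdd 1 := PresentedGroup.toGroup.of εrels

lemma Ainv : A⁻¹ = Ai := by
  apply inv_eq_of_mul_eq_one_right
  ext i j
  simp only [Matrix.SpecialLinearGroup.coe_mul]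
  fin_cases i <;> fin_cases j <;> simp [A, Ai, Matrix.mul_apply, Fin.sum_univ_two]

lemma Binv : B⁻¹ = Bi := by
  apply inv_eq_of_mul_eq_one_right
  ext i j
  simp only [Matrix.SpecialLinearGroup.coe_mul]
  fin_cases i <;> fin_cases j <;> simp [B, Bi, Matrix.mul_apply, Fin.sum_univ_two]

def b5 : Braid 2 := (σ₁ ^ 4)⁻¹ * σ₂ ^ 2 * (σ₁ ^ 3)⁻¹ * σ₂⁻¹ * σ₁ * Δ₃ ^ 2

lemma εb5 : ε b5 = Multiplicative.ofAdd 1 := by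
  simp only [b5, Δ₃, map_mul, map_inv, map_pow, εσ₁, εσ₂]
  decide

def C : SL2 := ⟨!![22, 53; -5, -12], by norm_num [Matrix.det_fin_two_of]⟩

lemma ρb5 : ρ b5 = C := by
  simp only [b5, Δ₃, map_mul, map_inv, map_pow, ρσ₁, ρσ₂, inv_pow, Ainv, Binv]
  ext : 1
  simp only [inv_pow, Ainv, Matrix.SpecialLinearGroup.coe_mul, Matrix.SpecialLinearGroup.coe_pow, Matrix.SpecialLinearGroup.coe_inv]
  norm_num [A, B, Ai, Bi, C, pow_succ, Matrix.SpecialLinearGroup.coe_mul, Matrix.mul_fin_two, Matrix.adjugate_fin_two]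

lemma ρσ0 : ρ (σ 0) = A := ρσ₁
lemma εσ0 : ε (σ 0) = Multiplicative.ofAdd 1 := εσ₁

theorem b5_not_quasipositive :
    ¬ Quasipositive ((σ₁ ^ 4)⁻¹ * σ₂ ^ 2 * (σ₁ ^ 3)⁻¹ * σ₂⁻¹ * σ₁ * Δ₃ ^ 2) := by
  rintro ⟨l, hl⟩
  have hl' : b5 = (l.map fun w => w * σ 0 * w⁻¹).prod := hl
  -- the exponent sum forces the list to have length 1
  have hε : ε b5 = Multiplicative.ofAdd (1 : ℤ) ^ l.length := by
    rw [hl', map_list_prod, List.map_map]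
    have hall : ∀ x ∈ l.map (⇑ε ∘ fun w => w * σ 0 * w⁻¹), x = Multiplicative.ofAdd (1 : ℤ) := by
      intro x hx
      simp only [List.mem_map, Function.comp] at hx
      obtain ⟨w, _, rfl⟩ := hx
      rw [map_mul, map_mul, map_inv, εσ0, mul_comm (ε w), mul_assoc, mul_inv_cancel, mul_one]
    rw [List.prod_eq_pow_card _ _ hall, List.length_map]
  have hlen : l.length = 1 := by
    rw [εb5] at hε
    have := congrArg Multiplicative.toAdd hε
    simp at this
    omega
  obtain ⟨w, rfl⟩ := List.length_eq_one_iff.mp hlen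
  simp only [List.map_cons, List.map_nil, List.prod_cons, List.prod_nil, mul_one] at hl'
  -- apply the representation ρ and take traces
  have hC : C = ρ w * A * (ρ w)⁻¹ := by
    rw [← ρb5, hl', map_mul, map_mul, map_inv, ρσ0]
  have h2 : Matrix.trace (C : Matrix (Fin 2) (Fin 2) ℤ) =
      Matrix.trace (A : Matrix (Fin 2) (Fin 2) ℤ) := by
    rw [hC, Matrix.SpecialLinearGroup.coe_mul, Matrix.SpecialLinearGroup.coe_mul,
      Matrix.trace_mul_comm, ← mul_assoc, ← Matrix.SpecialLinearGroup.coe_mul,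
      inv_mul_cancel, Matrix.SpecialLinearGroup.coe_one, one_mul]
  norm_num [C, A, Matrix.trace_fin_two_of] at h2
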